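/- arXiv:0910.3187 — 3 statements merged into one kernel-verified Lean document; each statement's English description precedes it below -/
import Mathlib

section
/- Let A be a commutative ring, let a : ℕ → A be a sequence such that a_0 is a unit of A, let c : ℕ → A be any sequence, and let n ∈ ℕ. Let f = Σ_{i≥0} a_i z^i ∈ A⟦z⟧, which is a unit of A⟦z⟧ since its constant coefficient a_0 is a unit. Then Σ_α μ(−(n+1); α)·c_{n−|α|′}·a_0^{n−|α|}·∏_{i≥1} a_i^{α_i} = a_0^{2n+1}·Σ_{k=0}^{n} c_{n−k}·(coefficient of z^k in f^{−(n+1)}), where the left-hand sum runs over finitely supported α : {1,2,3,…} → ℕ with |α| ≤ n and |α|′ ≤ n, and f^{−(n+1)} denotes the (n+1)st power of the multiplicative inverse of f in A⟦z⟧. -/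
noncomputable section

/-- The modified multinomial coefficient
`μ(-(n+1); α) = (-1)^{|α|} (n+|α|)! / (n! ∏ αᵢ!)`, the coefficient of
`b₁^{α₁}b₂^{α₂}⋯` in the formal expansion of `(1 + b₁ + b₂ + ⋯)^{-(n+1)}`. -/
def muCoef (n : ℕ) (α : ℕ+ →₀ ℕ) : ℤ :=
  (-1) ^ (α.sum fun _ m => m) *
    (((n + α.sum fun _ m => m).factorial /
      (n.factorial * α.prod fun _ m => m.factorial) : ℕ) : ℤ)

namespace McClureAux

open PowerSeries

variable {A : Type*} [CommRing A]

-- L0: coefficients up to k of powers only depend on coefficients up to k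
lemma coeff_pow_congr {f₁ f₂ : A⟦X⟧} {k : ℕ} (h : ∀ j ≤ k, coeff j f₁ = coeff j f₂)
    (m : ℕ) : ∀ j ≤ k, coeff j (f₁ ^ m) = coeff j (f₂ ^ m) := by
  induction m with
  | zero => intro j _; simp
  | succ m ih =>
    intro j hj
    rw [pow_succ, pow_succ, coeff_mul, coeff_mul]
    refine Finset.sum_congr rfl fun p hp => ?_
    rw [Finset.HasAntidiagonal.mem_antidiagonal] at hp
    rw [ih p.1 (by omega), h p.2 (by omega)]

lemma coeff_pow_eq_zero {g : A⟦X⟧} (hg : constantCoeff g = 0) {p m : ℕ} (h : p < m) :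
    coeff p (g ^ m) = 0 := by
  have : (X : A⟦X⟧) ^ m ∣ g ^ m := pow_dvd_pow_of_dvd (X_dvd_iff.mpr hg) m
  exact (X_pow_dvd_iff.mp this) p h

-- L2
lemma coeff_mul_H {g : A⟦X⟧} (hg : constantCoeff g = 0) (e : ℕ → A) (p : ℕ) :
    coeff p (g * PowerSeries.mk (fun r => ∑ m ∈ Finset.range (r+1), e m * coeff r (g ^ m)))
      = ∑ m ∈ Finset.range (p+1), e m * coeff p (g ^ (m+1)) := by
  rw [coeff_mul]
  have step : ∀ q ∈ Finset.HasAntidiagonal.antidiagonal p,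
      (coeff q.1 g) * (coeff q.2 (PowerSeries.mk
        (fun r => ∑ m ∈ Finset.range (r+1), e m * coeff r (g ^ m))))
      = ∑ m ∈ Finset.range (p+1), e m * (coeff q.1 g * coeff q.2 (g ^ m)) := by
    intro q hq
    rw [Finset.HasAntidiagonal.mem_antidiagonal] at hq
    rw [coeff_mk, Finset.mul_sum]
    simp only [mul_left_comm (coeff q.1 g)]
    apply Finset.sum_subset
    · intro x hx; simp only [Finset.mem_range] at *; omega
    · intro x _ hx
      simp only [Finset.mem_range, not_lt] at hx
      rw [coeff_pow_eq_zero hg (by omega), mul_zero, mul_zero]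
  rw [Finset.sum_congr rfl step, Finset.sum_comm]
  refine Finset.sum_congr rfl fun m _ => ?_
  rw [← Finset.mul_sum, pow_succ', coeff_mul]

/-- the series `Σ_m (-1)^m C(n+m,m) g^m` -/
def Hser (g : A⟦X⟧) (n : ℕ) : A⟦X⟧ :=
  PowerSeries.mk fun r => ∑ m ∈ Finset.range (r+1),
    ((-1 : A) ^ m * ((n+m).choose m : A)) * coeff r (g ^ m)

lemma one_add_mul_Hser {g : A⟦X⟧} (hg : constantCoeff g = 0) (n : ℕ) :
    (1 + g) ^ (n + 1) * Hser g n = 1 := by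
  induction n with
  | zero =>
    ext p
    rw [pow_one, add_mul, one_mul, map_add, Hser, coeff_mul_H hg, coeff_mk]
    rw [Finset.sum_range_succ (fun m => ((-1:A)^m * ((0+m).choose m : A)) * coeff p (g ^ (m+1)))]
    rw [coeff_pow_eq_zero hg (by omega), mul_zero, add_zero]
    rw [Finset.sum_range_succ' (fun m => ((-1:A)^m * ((0+m).choose m : A)) * coeff p (g ^ m))]
    rw [add_assoc, add_comm, add_assoc, ← Finset.sum_add_distrib]
    have : ∀ m ∈ Finset.range p,
        ((-1:A)^m * ((0+m).choose m : A)) * coeff p (g ^ (m+1)) +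
        ((-1:A)^(m+1) * ((0+(m+1)).choose (m+1) : A)) * coeff p (g ^ (m+1)) = 0 := by
      intro m _
      simp [pow_succ]
    rw [Finset.sum_congr rfl this, Finset.sum_const_zero, add_zero]
    simp
  | succ n ih =>
    have key : (1 + g) * Hser g (n+1) = Hser g n := by
      ext p
      rw [add_mul, one_mul, map_add, Hser, Hser, coeff_mul_H hg, coeff_mk, coeff_mk]
      rw [Finset.sum_range_succ (fun m => ((-1:A)^m * ((n+1+m).choose m : A)) * coeff p (g ^ (m+1)))]
      rw [coeff_pow_eq_zero hg (by omega), mul_zero, add_zero]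
      rw [Finset.sum_range_succ' (fun m => ((-1:A)^m * ((n+1+m).choose m : A)) * coeff p (g ^ m))]
      rw [Finset.sum_range_succ' (fun m => ((-1:A)^m * ((n+m).choose m : A)) * coeff p (g ^ m))]
      rw [add_right_comm, ← Finset.sum_add_distrib]
      simp only [add_zero, Nat.choose_zero_right]
      congr 1
      refine Finset.sum_congr rfl fun m _ => ?_
      have pascal : (n+1+(m+1)).choose (m+1) = (n+1+m).choose m + (n+(m+1)).choose (m+1) := by
        rw [show n+1+(m+1) = (n+m+1)+1 by ring, Nat.choose_succ_succ' (n+m+1) m]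
        congr 2 <;> omega
      have pascalA : ((n+1+(m+1)).choose (m+1) : A)
          = ((n+1+m).choose m : A) + ((n+(m+1)).choose (m+1) : A) := by
        exact_mod_cast congrArg (Nat.cast : ℕ → A) pascal
      rw [pascalA]; ring
    rw [pow_succ, mul_assoc, key, ih]

-- L4
lemma inv_pow_coeff (a : ℕ → A) (ha : IsUnit (a 0)) (n k : ℕ) :
    (a 0) ^ (n+1) * coeff k ((PowerSeries.mk a).invOfUnit ha.unit ^ (n + 1))
      = coeff k (Hser (PowerSeries.C (↑ha.unit⁻¹ : A) * PowerSeries.mk a - 1) n) := by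
  set b : A := ↑ha.unit⁻¹ with hb
  set g : A⟦X⟧ := PowerSeries.C b * PowerSeries.mk a - 1 with hgdef
  have hab : a 0 * b = 1 := by
    have := ha.unit.mul_inv
    rw [ha.unit_spec] at this
    exact this
  have hg : constantCoeff g = 0 := by
    rw [hgdef, map_sub, map_mul, map_one, constantCoeff_C]
    rw [constantCoeff_mk, mul_comm, hab, sub_self]
  have hfact : PowerSeries.C (a 0) * (1 + g) = PowerSeries.mk a := by
    rw [hgdef, mul_add, mul_one, mul_sub, mul_one, ← mul_assoc, ← map_mul, hab, map_one, one_mul]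
    ring
  have hmulinv : (PowerSeries.mk a) * (PowerSeries.mk a).invOfUnit ha.unit = 1 :=
    PowerSeries.mul_invOfUnit _ _ (by simp [ha.unit_spec])
  have key : PowerSeries.C ((a 0)^(n+1)) * ((PowerSeries.mk a).invOfUnit ha.unit ^ (n+1))
      = Hser g n := by
    have h1 : (PowerSeries.mk a) ^ (n+1) * Hser g n = PowerSeries.C ((a 0)^(n+1)) := by
      rw [← hfact, mul_pow, mul_assoc, one_add_mul_Hser hg, mul_one, map_pow]
    calc PowerSeries.C ((a 0)^(n+1)) * ((PowerSeries.mk a).invOfUnit ha.unit ^ (n+1))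
        = (PowerSeries.mk a) ^ (n+1) * Hser g n * ((PowerSeries.mk a).invOfUnit ha.unit ^ (n+1)) := by rw [h1]
      _ = ((PowerSeries.mk a) * (PowerSeries.mk a).invOfUnit ha.unit) ^ (n+1) * Hser g n := by ring
      _ = Hser g n := by rw [hmulinv, one_pow, one_mul]
  rw [← key, coeff_C_mul]

-- L6
lemma coeff_pow_multinomial (d : ℕ → A) (n : ℕ) {k : ℕ} (hk : k ≤ n) (m : ℕ) :
    coeff k ((PowerSeries.mk fun j => if j = 0 then 0 else d j) ^ m)
      = ∑ κ ∈ Finset.piAntidiag (Finset.Icc (1:ℕ+) ⟨n+1, Nat.succ_pos n⟩) m,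
          if (∑ i ∈ Finset.Icc (1:ℕ+) ⟨n+1, Nat.succ_pos n⟩, (i:ℕ) * κ i) = k then
            (Nat.multinomial (Finset.Icc (1:ℕ+) ⟨n+1, Nat.succ_pos n⟩) κ : A) *
              ∏ i ∈ Finset.Icc (1:ℕ+) ⟨n+1, Nat.succ_pos n⟩, d (i:ℕ) ^ κ i
          else 0 := by
  classical
  set s : Finset ℕ+ := Finset.Icc (1:ℕ+) ⟨n+1, Nat.succ_pos n⟩ with hs
  set gt : A⟦X⟧ := ∑ i ∈ s, PowerSeries.C (d (i:ℕ)) * X ^ (i:ℕ) with hgt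
  have hagree : ∀ j ≤ k, coeff j (PowerSeries.mk fun j => if j = 0 then 0 else d j)
      = coeff j gt := by
    intro j hj
    rw [coeff_mk, hgt, map_sum]
    have hterm : ∀ i ∈ s, coeff j (PowerSeries.C (d (i:ℕ)) * X ^ (i:ℕ))
        = if (i:ℕ) = j then d (i:ℕ) else 0 := by
      intro i _
      rw [coeff_C_mul, coeff_X_pow, mul_ite, mul_one, mul_zero]
      simp [eq_comm]
    rw [Finset.sum_congr rfl hterm]
    rcases Nat.eq_zero_or_pos j with hj0 | hj0
    · subst hj0
      rw [if_pos rfl]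
      apply (Finset.sum_eq_zero ?_).symm
      intro i _
      rw [if_neg]; exact i.pos.ne'
    · rw [if_neg (by omega)]
      set jp : ℕ+ := ⟨j, hj0⟩ with hjp
      have hmem : jp ∈ s := by
        rw [hs]; apply Finset.mem_Icc.mpr
        constructor
        · exact jp.one_le
        · change j ≤ n+1; omega
      rw [Finset.sum_eq_single_of_mem jp hmem]
      · exact (if_pos rfl).symm
      · intro i _ hne
        rw [if_neg]
        intro hcoe
        exact hne (PNat.coe_injective hcoe)
  rw [coeff_pow_congr hagree m k le_rfl, hgt,
    Finset.sum_pow_eq_sum_piAntidiag s (fun i => PowerSeries.C (d (i:ℕ)) * X ^ (i:ℕ)) m,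
    map_sum]
  refine Finset.sum_congr rfl fun κ hκ => ?_
  have hprod : ∏ i ∈ s, (PowerSeries.C (d (i:ℕ)) * X ^ (i:ℕ)) ^ κ i
      = PowerSeries.C (∏ i ∈ s, d (i:ℕ) ^ κ i) * X ^ (∑ i ∈ s, (i:ℕ) * κ i) := by
    rw [map_prod, ← Finset.prod_pow_eq_pow_sum, ← Finset.prod_mul_distrib]
    refine Finset.prod_congr rfl fun i _ => ?_
    rw [mul_pow, map_pow, pow_mul]
  rw [hprod, show ((Nat.multinomial s κ : A⟦X⟧)) = PowerSeries.C ((Nat.multinomial s κ : A))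
      from (map_natCast (PowerSeries.C (R := A)) _).symm, ← mul_assoc, ← map_mul, coeff_C_mul,
    coeff_X_pow, mul_ite, mul_one, mul_zero]
  simp [eq_comm]

lemma multinomial_superset {ι : Type*} [DecidableEq ι] (s : Finset ι) (κ : ι → ℕ)
    (t : Finset ι) (hts : t ⊆ s) (h : ∀ i ∈ s, i ∉ t → κ i = 0) :
    Nat.multinomial t κ = Nat.multinomial s κ := by
  have hprod : ∏ i ∈ t, (κ i).factorial = ∏ i ∈ s, (κ i).factorial := by
    apply Finset.prod_subset hts
    intro i hi hni
    rw [h i hi hni]; rfl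
  have hsum : ∑ i ∈ t, κ i = ∑ i ∈ s, κ i := by
    apply Finset.sum_subset hts
    intro i hi hni
    exact h i hi hni
  have h1 := Nat.multinomial_spec t κ
  have h2 := Nat.multinomial_spec s κ
  rw [hprod, hsum] at h1
  have hpos : 0 < ∏ i ∈ s, (κ i).factorial :=
    Finset.prod_pos fun i _ => Nat.factorial_pos _
  exact Nat.eq_of_mul_eq_mul_left hpos (h1.trans h2.symm)

lemma muCoef_eq (n : ℕ) (α : ℕ+ →₀ ℕ) :
    muCoef n α = (-1) ^ (α.sum fun _ m => m) *
      (((n + α.sum fun _ m => m).choose (α.sum fun _ m => m)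
        * Nat.multinomial α.support α : ℕ) : ℤ) := by
  unfold muCoef
  congr 2
  set m := α.sum fun _ m => m with hm
  set P := α.prod fun _ m => m.factorial with hP
  have hPdef : P = ∏ i ∈ α.support, (α i).factorial := rfl
  have hmdef : m = ∑ i ∈ α.support, α i := rfl
  have hspec : P * Nat.multinomial α.support α = m.factorial := by
    rw [hPdef, hmdef]; exact Nat.multinomial_spec _ _
  apply Nat.div_eq_of_eq_mul_left
  · exact Nat.mul_pos n.factorial_pos (hPdef ▸ Finset.prod_pos fun i _ => Nat.factorial_pos _)
  · -- (n+m)! = (C(n+m,m) * mult) * (n! * P)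
    have hc : (n+m).choose m * m.factorial * n.factorial = (n+m).factorial := by
      have := Nat.choose_mul_factorial_mul_factorial (Nat.le_add_left m n)
      rwa [Nat.add_sub_cancel] at this
    calc (n+m).factorial = (n+m).choose m * m.factorial * n.factorial := hc.symm
      _ = (n+m).choose m * (P * Nat.multinomial α.support α) * n.factorial := by rw [hspec]
      _ = (n+m).choose m * Nat.multinomial α.support α * (n.factorial * P) := by ring

-- LHS chain
lemma lhs_chain (a : ℕ → A) (ha : IsUnit (a 0)) (c : ℕ → A) (n : ℕ) :
    (∑ᶠ α : ℕ+ →₀ ℕ,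
      if (α.sum fun _ m => m) ≤ n ∧ (α.sum fun i m => (i : ℕ) * m) ≤ n then
        (muCoef n α : A) * c (n - α.sum fun i m => (i : ℕ) * m) *
          a 0 ^ (n - α.sum fun _ m => m) * (α.prod fun i m => a (i : ℕ) ^ m)
      else 0)
    = ∑ m ∈ Finset.range (n+1), ∑ κ ∈ Finset.piAntidiag (Finset.Icc (1:ℕ+) ⟨n+1, Nat.succ_pos n⟩) m,
        (if (∑ i ∈ Finset.Icc (1:ℕ+) ⟨n+1, Nat.succ_pos n⟩, (i:ℕ) * κ i) ≤ n then
          c (n - (∑ i ∈ Finset.Icc (1:ℕ+) ⟨n+1, Nat.succ_pos n⟩, (i:ℕ) * κ i)) * a 0 ^ n *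
            ((-1 : A) ^ m * ((n+m).choose m : A)) *
            (Nat.multinomial (Finset.Icc (1:ℕ+) ⟨n+1, Nat.succ_pos n⟩) κ : A) *
            ∏ i ∈ Finset.Icc (1:ℕ+) ⟨n+1, Nat.succ_pos n⟩, ((↑ha.unit⁻¹ : A) * a (i:ℕ)) ^ κ i
        else 0) := by
  classical
  set s : Finset ℕ+ := Finset.Icc (1:ℕ+) ⟨n+1, Nat.succ_pos n⟩ with hs
  set b : A := ↑ha.unit⁻¹ with hb
  have hab : a 0 * b = 1 := by
    have := ha.unit.mul_inv
    rw [ha.unit_spec] at this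
    exact this
  set F : (ℕ+ →₀ ℕ) → A := fun α =>
      if (α.sum fun _ m => m) ≤ n ∧ (α.sum fun i m => (i : ℕ) * m) ≤ n then
        (muCoef n α : A) * c (n - α.sum fun i m => (i : ℕ) * m) *
          a 0 ^ (n - α.sum fun _ m => m) * (α.prod fun i m => a (i : ℕ) ^ m)
      else 0 with hF
  set tF : (ℕ+ → ℕ) → (ℕ+ →₀ ℕ) := fun κ => ∑ i ∈ s, Finsupp.single i (κ i) with htF
  have htF_apply : ∀ (κ : ℕ+ → ℕ) (j : ℕ+), tF κ j = if j ∈ s then κ j else 0 := by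
    intro κ j
    rw [htF]
    rw [Finset.sum_apply']
    simp only [Finsupp.single_apply]
    exact Finset.sum_ite_eq' s j κ
  have hcoe : ∀ κ : ℕ+ → ℕ, (∀ i, κ i ≠ 0 → i ∈ s) → ⇑(tF κ) = κ := by
    intro κ hsupp
    funext j
    rw [htF_apply]
    split
    · rfl
    · rename_i hj
      by_contra h
      exact hj (hsupp j (fun hc => h hc.symm))
  -- support of F is inside T
  set W : Finset (ℕ+ → ℕ) := (Finset.range (n+1)).biUnion
      (fun m => Finset.piAntidiag s m) with hW
  have hsub_s : ∀ α : ℕ+ →₀ ℕ, (α.sum fun i m => (i : ℕ) * m) ≤ n → α.support ⊆ s := by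
    intro α hwt i hi
    have h1 : (i:ℕ) * α i ≤ α.sum fun i m => (i : ℕ) * m := by
      apply Finset.single_le_sum (f := fun i : ℕ+ => (i:ℕ) * α i) (fun _ _ => Nat.zero_le _) hi
    have h2 : 1 ≤ α i := Nat.one_le_iff_ne_zero.mpr (Finsupp.mem_support_iff.mp hi)
    have h3 : (i:ℕ) ≤ n := le_trans (le_trans (Nat.le_mul_of_pos_right _ h2) h1) hwt
    rw [hs]; apply Finset.mem_Icc.mpr
    exact ⟨i.one_le, by { change (i:ℕ) ≤ n+1; omega }⟩
  have halphasum : ∀ α : ℕ+ →₀ ℕ, α.support ⊆ s →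
      (α.sum fun _ m => m) = ∑ i ∈ s, α i :=
    fun α h => Finsupp.sum_of_support_subset α h _ (fun _ _ => rfl)
  have halphawt : ∀ α : ℕ+ →₀ ℕ, α.support ⊆ s →
      (α.sum fun i m => (i:ℕ) * m) = ∑ i ∈ s, (i:ℕ) * α i :=
    fun α h => Finsupp.sum_of_support_subset α h _ (fun _ _ => mul_zero _)
  have hFsupp : Function.support F ⊆ ↑(W.image tF) := by
    intro α hα
    rw [Function.mem_support] at hα
    have hcond : (α.sum fun _ m => m) ≤ n ∧ (α.sum fun i m => (i : ℕ) * m) ≤ n := by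
      by_contra h
      apply hα
      rw [hF]
      exact if_neg h
    have hss := hsub_s α hcond.2
    have hmem : ⇑α ∈ Finset.piAntidiag s (α.sum fun _ m => m) := by
      rw [Finset.mem_piAntidiag]
      exact ⟨(halphasum α hss).symm, fun i hi => hss (Finsupp.mem_support_iff.mpr hi)⟩
    have hαeq : tF ⇑α = α := by
      ext j
      rw [htF_apply]
      split
      · rfl
      · rename_i hj
        exact (Finsupp.notMem_support_iff.mp (fun hc => hj (hss hc))).symm
    simp only [Finset.coe_image, Set.mem_image, Finset.mem_coe]
    exact ⟨⇑α, Finset.mem_biUnion.mpr ⟨_, Finset.mem_range.mpr (by omega), hmem⟩, hαeq⟩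
  rw [finsum_eq_sum_of_support_subset F hFsupp]
  have hinj : Set.InjOn tF ↑W := by
    intro κ₁ h1 κ₂ h2 heq
    rw [Finset.mem_coe, hW, Finset.mem_biUnion] at h1 h2
    obtain ⟨m₁, _, hm1⟩ := h1
    obtain ⟨m₂, _, hm2⟩ := h2
    have c1 := hcoe κ₁ (fun i hi => (Finset.mem_piAntidiag.mp hm1).2 i hi)
    have c2 := hcoe κ₂ (fun i hi => (Finset.mem_piAntidiag.mp hm2).2 i hi)
    rw [← c1, ← c2, heq]
  rw [Finset.sum_image (fun x hx y hy h => hinj hx hy h)]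
  have hdisj : Set.PairwiseDisjoint (↑(Finset.range (n+1)) : Set ℕ)
      (fun m => Finset.piAntidiag s m) := by
    intro m₁ _ m₂ _ hne
    apply Finset.disjoint_left.mpr
    intro κ h1 h2
    exact hne ((Finset.mem_piAntidiag.mp h1).1.symm.trans (Finset.mem_piAntidiag.mp h2).1)
  rw [hW, Finset.sum_biUnion hdisj]
  refine Finset.sum_congr rfl fun m hm => ?_
  refine Finset.sum_congr rfl fun κ hκ => ?_
  rw [Finset.mem_range, Nat.lt_succ_iff] at hm
  rw [Finset.mem_piAntidiag] at hκ
  obtain ⟨hκsum, hκsupp⟩ := hκ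
  have hc := hcoe κ hκsupp
  have hss : (tF κ).support ⊆ s := by
    intro i hi
    rw [Finsupp.mem_support_iff, hc] at hi
    exact hκsupp i hi
  have hsum1 : ((tF κ).sum fun _ m => m) = m := by
    rw [halphasum _ hss]
    simp only [hc]; exact hκsum
  have hwt : ((tF κ).sum fun i m => (i:ℕ) * m) = ∑ i ∈ s, (i:ℕ) * κ i := by
    rw [halphawt _ hss]; simp only [hc]
  have hprodA : ((tF κ).prod fun i m => a (i:ℕ) ^ m) = ∏ i ∈ s, a (i:ℕ) ^ κ i := by
    rw [Finsupp.prod_of_support_subset _ hss _ (fun i _ => pow_zero _)]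
    simp only [hc]
  have hmult : Nat.multinomial (tF κ).support ⇑(tF κ) = Nat.multinomial s κ := by
    rw [hc]
    exact multinomial_superset s κ _ hss (fun i _ hni => by
      by_contra h
      exact hni (Finsupp.mem_support_iff.mpr (by rwa [hc])))
  rw [hF]
  simp only [hsum1, hwt, hprodA]
  have hcond_iff : (m ≤ n ∧ (∑ i ∈ s, (i:ℕ) * κ i) ≤ n) ↔ ((∑ i ∈ s, (i:ℕ) * κ i) ≤ n) :=
    and_iff_right hm
  rw [if_congr hcond_iff rfl rfl]
  split
  · rename_i hwtle
    -- value matching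
    have hmwt : m ≤ ∑ i ∈ s, (i:ℕ) * κ i := by
      rw [← hκsum]
      apply Finset.sum_le_sum
      intro i _
      exact Nat.le_mul_of_pos_left (κ i) i.pos
    have hmn : m ≤ n := hm
    have hmu : (muCoef n (tF κ) : A)
        = (-1 : A) ^ m * ((n+m).choose m : A) * (Nat.multinomial s κ : A) := by
      rw [muCoef_eq, hsum1, hmult]
      push_cast
      ring
    rw [hmu]
    have hbprod : ∏ i ∈ s, (b * a (i:ℕ)) ^ κ i = b ^ m * ∏ i ∈ s, a (i:ℕ) ^ κ i := by
      rw [← hκsum, ← Finset.prod_pow_eq_pow_sum, ← Finset.prod_mul_distrib]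
      exact Finset.prod_congr rfl fun i _ => mul_pow _ _ _
    rw [hbprod]
    have hpow : a 0 ^ n * b ^ m = a 0 ^ (n - m) := by
      rw [show n = (n - m) + m by omega, pow_add, mul_assoc, ← mul_pow, hab, one_pow, mul_one]
      rw [Nat.add_sub_cancel]
    calc (-1:A)^m * ((n+m).choose m : A) * (Nat.multinomial s κ : A) * c (n - ∑ i ∈ s, (i:ℕ) * κ i)
          * a 0 ^ (n-m) * ∏ i ∈ s, a (i:ℕ) ^ κ i
        = (a 0 ^ n * b ^ m) * ((-1:A)^m * ((n+m).choose m : A)) * (Nat.multinomial s κ : A)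
          * c (n - ∑ i ∈ s, (i:ℕ) * κ i) * ∏ i ∈ s, a (i:ℕ) ^ κ i := by rw [hpow]; ring
      _ = c (n - ∑ i ∈ s, (i:ℕ) * κ i) * a 0 ^ n * ((-1:A)^m * ((n+m).choose m : A))
          * (Nat.multinomial s κ : A) * (b ^ m * ∏ i ∈ s, a (i:ℕ) ^ κ i) := by ring
  · rfl

-- RHS chain
lemma rhs_chain (a : ℕ → A) (ha : IsUnit (a 0)) (c : ℕ → A) (n : ℕ) :
    a 0 ^ (2 * n + 1) *
        ∑ k ∈ Finset.range (n + 1),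
          c (n - k) *
            PowerSeries.coeff k ((PowerSeries.mk a).invOfUnit ha.unit ^ (n + 1))
    = ∑ m ∈ Finset.range (n+1), ∑ κ ∈ Finset.piAntidiag (Finset.Icc (1:ℕ+) ⟨n+1, Nat.succ_pos n⟩) m,
        (if (∑ i ∈ Finset.Icc (1:ℕ+) ⟨n+1, Nat.succ_pos n⟩, (i:ℕ) * κ i) ≤ n then
          c (n - (∑ i ∈ Finset.Icc (1:ℕ+) ⟨n+1, Nat.succ_pos n⟩, (i:ℕ) * κ i)) * a 0 ^ n *
            ((-1 : A) ^ m * ((n+m).choose m : A)) *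
            (Nat.multinomial (Finset.Icc (1:ℕ+) ⟨n+1, Nat.succ_pos n⟩) κ : A) *
            ∏ i ∈ Finset.Icc (1:ℕ+) ⟨n+1, Nat.succ_pos n⟩, ((↑ha.unit⁻¹ : A) * a (i:ℕ)) ^ κ i
        else 0) := by
  classical
  set s : Finset ℕ+ := Finset.Icc (1:ℕ+) ⟨n+1, Nat.succ_pos n⟩ with hs
  set b : A := ↑ha.unit⁻¹ with hb
  set d : ℕ → A := fun j => b * a j with hd
  set G : A⟦X⟧ := PowerSeries.mk fun j => if j = 0 then 0 else d j with hG
  have hab : a 0 * b = 1 := by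
    have := ha.unit.mul_inv
    rw [ha.unit_spec] at this
    exact this
  have hGeq : PowerSeries.C b * PowerSeries.mk a - 1 = G := by
    ext j
    rw [map_sub, coeff_C_mul, coeff_mk, PowerSeries.coeff_one, hG, coeff_mk]
    cases j with
    | zero => simp [mul_comm, hab]
    | succ j => simp [hd]
  have hGconst : constantCoeff G = 0 := by
    rw [hG]
    simpa using (coeff_zero_eq_constantCoeff (R := A)).symm ▸ (coeff_mk 0 _)
  rw [Finset.mul_sum]
  have step1 : ∀ k ∈ Finset.range (n+1),
      a 0 ^ (2*n+1) * (c (n-k) * coeff k ((PowerSeries.mk a).invOfUnit ha.unit ^ (n+1)))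
      = ∑ m ∈ Finset.range (n+1), ∑ κ ∈ Finset.piAntidiag s m,
          (if (∑ i ∈ s, (i:ℕ) * κ i) = k then
            c (n-k) * a 0 ^ n * ((-1 : A) ^ m * ((n+m).choose m : A)) *
              (Nat.multinomial s κ : A) * ∏ i ∈ s, d (i:ℕ) ^ κ i
          else 0) := by
    intro k hk
    rw [Finset.mem_range] at hk
    have hkn : k ≤ n := by omega
    have e1 : a 0 ^ (2*n+1) * (c (n-k) * coeff k ((PowerSeries.mk a).invOfUnit ha.unit ^ (n+1)))
        = c (n-k) * a 0 ^ n * (a 0 ^ (n+1) * coeff k ((PowerSeries.mk a).invOfUnit ha.unit ^ (n+1))) := by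
      rw [show 2*n+1 = n + (n+1) by ring, pow_add]; ring
    rw [e1, inv_pow_coeff a ha n k, hGeq, Hser, coeff_mk]
    have e2 : ∑ m ∈ Finset.range (k+1), ((-1:A)^m * ((n+m).choose m : A)) * coeff k (G^m)
        = ∑ m ∈ Finset.range (n+1), ((-1:A)^m * ((n+m).choose m : A)) * coeff k (G^m) := by
      apply Finset.sum_subset
      · intro x hx; simp only [Finset.mem_range] at *; omega
      · intro x _ hx
        simp only [Finset.mem_range, not_lt] at hx
        rw [coeff_pow_eq_zero hGconst (by omega), mul_zero]
    rw [e2]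
    rw [Finset.mul_sum (Finset.range (n+1)) _ (c (n-k) * a 0 ^ n)]
    refine Finset.sum_congr rfl fun m _ => ?_
    rw [hG, coeff_pow_multinomial d n hkn m]
    simp only [Finset.mul_sum]
    refine Finset.sum_congr rfl fun κ _ => ?_
    rw [mul_ite, mul_zero]
    split
    · ring
    · rw [mul_zero]
  rw [Finset.sum_congr rfl step1, Finset.sum_comm]
  refine Finset.sum_congr rfl fun m _ => ?_
  rw [Finset.sum_comm]
  refine Finset.sum_congr rfl fun κ _ => ?_
  rw [Finset.sum_ite_eq (Finset.range (n+1)) (∑ i ∈ s, (i:ℕ) * κ i)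
    (fun k => c (n-k) * a 0 ^ n * ((-1 : A) ^ m * ((n+m).choose m : A)) *
      (Nat.multinomial s κ : A) * ∏ i ∈ s, d (i:ℕ) ^ κ i)]
  simp only [Finset.mem_range, Nat.lt_succ_iff, hd]

end McClureAux

/-- Rearrangement of McClure's sum: for any commutative ring `A`, any sequence
`a : ℕ → A` with `a 0` a unit, any sequence `c : ℕ → A` and any `n`,
`∑_α μ(-(n+1); α) c_{n-|α|'} a₀^{n-|α|} ∏_{i≥1} aᵢ^{αᵢ}
  = a₀^{2n+1} ∑_{k=0}^{n} c_{n-k} · (coeff of z^k in f^{-(n+1)})`,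
where `f = ∑ aᵢ zⁱ` and the left sum runs over finitely supported
`α : {1,2,…} → ℕ` with `|α| ≤ n` and `|α|' ≤ n`. -/
theorem mcclure_sum_rearranged {A : Type*} [CommRing A] (a : ℕ → A) (ha : IsUnit (a 0))
    (c : ℕ → A) (n : ℕ) :
    (∑ᶠ α : ℕ+ →₀ ℕ,
      if (α.sum fun _ m => m) ≤ n ∧ (α.sum fun i m => (i : ℕ) * m) ≤ n then
        (muCoef n α : A) * c (n - α.sum fun i m => (i : ℕ) * m) *
          a 0 ^ (n - α.sum fun _ m => m) * (α.prod fun i m => a (i : ℕ) ^ m)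
      else 0)
    = a 0 ^ (2 * n + 1) *
        ∑ k ∈ Finset.range (n + 1),
          c (n - k) *
            PowerSeries.coeff k ((PowerSeries.mk a).invOfUnit ha.unit ^ (n + 1)) :=
  (McClureAux.lhs_chain a ha c n).trans (McClureAux.rhs_chain a ha c n).symm

end
end

section
/- Let A be a commutative ring, let a : ℕ → A be a sequence such that a_0 is a unit of A, and let n, k ∈ ℕ with k ≤ n. Let f = Σ_{i≥0} a_i z^i ∈ A⟦z⟧, a unit of A⟦z⟧. Then a_0^{2n+1}·(coefficient of z^k in f^{−(n+1)}) = Σ_α μ(−(n+1); α)·a_0^{n−|α|}·∏_{i≥1} a_i^{α_i}, where the sum runs over finitely supported α : {1,2,3,…} → ℕ with |α|′ = k (note that such α automatically satisfy |α| ≤ |α|′ = k ≤ n, so the exponent n−|α| is a natural number, and the sum is finite). -/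
noncomputable section

section Helpers
open PowerSeries Finset
variable {A : Type*} [CommRing A]

lemma coeff_one_add_X_pow (N l : ℕ) :
    PowerSeries.coeff (R := A) l ((1 + X) ^ N) = N.choose l := by
  rw [add_comm (1 : A⟦X⟧) X, add_pow]
  rw [map_sum]
  have : ∀ p ∈ Finset.range (N+1),
      coeff l (X ^ p * 1 ^ (N - p) * (N.choose p : A⟦X⟧))
        = if p = l then (N.choose p : A) else 0 := by
    intro p _
    rw [one_pow, mul_one, ← map_natCast (C (R := A)), mul_comm, coeff_C_mul, coeff_X_pow]
    split
    · rename_i hh; subst hh; simp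
    · rename_i hh; rw [if_neg (by omega), mul_zero]
  rw [Finset.sum_congr rfl this, Finset.sum_ite_eq' (Finset.range (N+1)) l
    (fun p => (N.choose p : A))]
  split
  · rfl
  · rename_i h
    rw [Nat.choose_eq_zero_of_lt (by simpa using h), Nat.cast_zero]

-- helper: powers of series with zero constant coeff

lemma coeff_pow_of_constantCoeff_zero {g : A⟦X⟧} (hg : constantCoeff g = 0)
    {i m : ℕ} (him : i < m) : PowerSeries.coeff i (g ^ m) = 0 := by
  obtain ⟨t, ht⟩ := PowerSeries.X_dvd_iff.2 hg
  rw [ht, mul_pow, PowerSeries.coeff_mul]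
  apply Finset.sum_eq_zero
  rintro ⟨p, q⟩ hpq
  rw [Finset.HasAntidiagonal.mem_antidiagonal] at hpq
  rw [PowerSeries.coeff_X_pow, if_neg (by omega), zero_mul]

-- helper: agreement up to k is multiplicative / power-stable

lemma coeff_pow_congr {u u' : A⟦X⟧} {k : ℕ}
    (h : ∀ m ≤ k, PowerSeries.coeff m u = PowerSeries.coeff m u') (j : ℕ) :
    ∀ m ≤ k, PowerSeries.coeff m (u ^ j) = PowerSeries.coeff m (u' ^ j) := by
  induction j with
  | zero => simp
  | succ j ih =>
    intro m hm
    rw [pow_succ, pow_succ, PowerSeries.coeff_mul, PowerSeries.coeff_mul]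
    apply Finset.sum_congr rfl
    rintro ⟨p, q⟩ hpq
    rw [Finset.HasAntidiagonal.mem_antidiagonal] at hpq
    rw [ih p (by omega) , h q (by omega)]

lemma one_add_X_pow_mul_W (n : ℕ) :
    (1 + X) ^ (n + 1) *
      PowerSeries.mk (fun j => (-1 : A) ^ j * ((n + j).choose n : A)) = 1 := by
  have h0 : ((1 - X) ^ (n+1) : A⟦X⟧) * PowerSeries.mk (fun j => ((n + j).choose n : A)) = 1 := by
    have := (invOneSubPow A (n+1)).inv_val
    rwa [invOneSubPow_inv_eq_one_sub_pow, invOneSubPow_val_succ_eq_mk_add_choose] at this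
  have h1 := congrArg (rescale (-1 : A)) h0
  rw [map_mul, map_pow, map_one] at h1
  have h2 : rescale (-1 : A) (1 - X) = 1 + X := by
    ext m
    rw [coeff_rescale]
    rcases m with _ | _ | m <;> simp [coeff_X]
  have h3 : rescale (-1 : A) (PowerSeries.mk (fun j => ((n + j).choose n : A)))
      = PowerSeries.mk (fun j => (-1 : A) ^ j * ((n + j).choose n : A)) := by
    rw [rescale_mk]
  rwa [h2, h3] at h1

lemma key_approx (n k : ℕ) (hk : k ≤ n) (g : A⟦X⟧) (hg : constantCoeff g = 0)
    (i : ℕ) (hi : i ≤ k) :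
    PowerSeries.coeff i ((1 + g) ^ (n + 1) *
      ∑ j ∈ Finset.range (k + 1), C ((-1 : A) ^ j * ((n + j).choose n : A)) * g ^ j)
    = PowerSeries.coeff i (1 : A⟦X⟧) := by
  classical
  set Wc : ℕ → A := fun j => (-1 : A) ^ j * ((n + j).choose n : A) with hWc
  set t : ℕ × ℕ → A := fun p => (((n+1).choose p.1 : A) * Wc p.2) * PowerSeries.coeff i (g ^ (p.1 + p.2)) with hT
  have expand : (1 + g) ^ (n + 1) = ∑ l ∈ Finset.range (n + 2), g ^ l * ((n+1).choose l : A⟦X⟧) := by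
    rw [add_comm (1 : A⟦X⟧) g, add_pow]
    exact Finset.sum_congr rfl (fun l _ => by rw [one_pow, mul_one])
  have ht0 : ∀ l j : ℕ, i < l + j → t (l, j) = 0 := by
    intro l j h
    simp only [hT]
    rw [coeff_pow_of_constantCoeff_zero hg h, mul_zero]
  have step1 : PowerSeries.coeff i ((1 + g) ^ (n + 1) *
      ∑ j ∈ Finset.range (k + 1), C (Wc j) * g ^ j)
      = ∑ p ∈ Finset.range (n + 2) ×ˢ Finset.range (k + 1), t p := by
    rw [expand, Finset.sum_mul_sum, ← Finset.sum_product']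
    rw [map_sum]
    apply Finset.sum_congr rfl
    rintro ⟨l, j⟩ _
    have hgen : ∀ (c : ℕ) (w : A) (l j : ℕ),
        g ^ l * (c : A⟦X⟧) * (C w * g ^ j) = C ((c : A) * w) * g ^ (l + j) := by
      intro c w l j
      rw [map_mul, map_natCast, pow_add]; ring
    rw [hgen, coeff_C_mul]
  rw [step1]
  -- restrict to pairs with l + j ≤ i
  have step2 : ∑ p ∈ Finset.range (n + 2) ×ˢ Finset.range (k + 1), t p
      = ∑ p ∈ (Finset.range (i+1) ×ˢ Finset.range (i+1)).filter (fun p => p.1 + p.2 ≤ i), t p := by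
    apply (Finset.sum_subset _ _).symm
    · rintro ⟨l, j⟩ hp
      simp only [Finset.mem_filter, Finset.mem_product, Finset.mem_range] at hp ⊢
      omega
    · rintro ⟨l, j⟩ hp1 hp2
      simp only [Finset.mem_filter, Finset.mem_product, Finset.mem_range, not_and, not_le] at hp1 hp2
      exact ht0 l j (by omega)
  rw [step2]
  have step3 : (Finset.range (i+1) ×ˢ Finset.range (i+1)).filter (fun p : ℕ × ℕ => p.1 + p.2 ≤ i)
      = (Finset.range (i+1)).biUnion Finset.HasAntidiagonal.antidiagonal := by
    ext ⟨l, j⟩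
    simp only [Finset.mem_filter, Finset.mem_product, Finset.mem_range, Finset.mem_biUnion,
      Finset.HasAntidiagonal.mem_antidiagonal]
    constructor
    · rintro ⟨⟨h1, h2⟩, h3⟩; exact ⟨l + j, by omega, rfl⟩
    · rintro ⟨m, hm, rfl⟩; omega
  rw [step3, Finset.sum_biUnion]
  · have inner : ∀ m ∈ Finset.range (i+1), ∑ p ∈ Finset.HasAntidiagonal.antidiagonal m, t p
        = (if m = 0 then (1:A) else 0) * PowerSeries.coeff i (g ^ m) := by
      intro m hm
      have e1 : ∑ p ∈ Finset.HasAntidiagonal.antidiagonal m, t p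
          = (∑ p ∈ Finset.HasAntidiagonal.antidiagonal m, ((n+1).choose p.1 : A) * Wc p.2) * PowerSeries.coeff i (g ^ m) := by
        rw [Finset.sum_mul]
        apply Finset.sum_congr rfl
        rintro ⟨l, j⟩ hp
        rw [Finset.HasAntidiagonal.mem_antidiagonal] at hp
        simp only [hT, hp]
      have e2 : (∑ p ∈ Finset.HasAntidiagonal.antidiagonal m, ((n+1).choose p.1 : A) * Wc p.2)
          = PowerSeries.coeff m ((1 + X) ^ (n + 1) * PowerSeries.mk (fun j => (-1 : A) ^ j * ((n + j).choose n : A))) := by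
        rw [PowerSeries.coeff_mul]
        apply Finset.sum_congr rfl
        rintro ⟨l, j⟩ hp
        rw [coeff_one_add_X_pow, coeff_mk]
      rw [e1, e2, one_add_X_pow_mul_W, PowerSeries.coeff_one]
    rw [Finset.sum_congr rfl inner]
    have : ∀ m ∈ Finset.range (i+1), (if m = 0 then (1:A) else 0) * PowerSeries.coeff i (g ^ m)
        = if m = 0 then PowerSeries.coeff i (1 : A⟦X⟧) else 0 := by
      intro m _
      split
      · rename_i h; subst h; rw [pow_zero, one_mul]
      · rw [zero_mul]
    rw [Finset.sum_congr rfl this, Finset.sum_ite_eq' (Finset.range (i+1)) 0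
      (fun _ => PowerSeries.coeff i (1 : A⟦X⟧)), if_pos (by simp)]
  · intro m1 h1 m2 h2 hne
    simp only [Finset.disjoint_left, Finset.HasAntidiagonal.mem_antidiagonal]
    rintro ⟨l, j⟩ ha hb
    exact hne (by omega)


lemma factorial_div_eq (n j : ℕ) (sp : Finset ℕ+) (κ : ℕ+ → ℕ) (hj : ∑ i ∈ sp, κ i = j) :
    (n + j).factorial / (n.factorial * ∏ i ∈ sp, (κ i).factorial)
      = (n + j).choose j * Nat.multinomial sp κ := by
  have h1 : (∏ i ∈ sp, (κ i).factorial) * Nat.multinomial sp κ = j.factorial := by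
    rw [Nat.multinomial_spec, hj]
  have h2 : (n + j).choose j * j.factorial * n.factorial = (n + j).factorial := by
    have := Nat.choose_mul_factorial_mul_factorial (Nat.le_add_left j n)
    simpa using this
  have h3 : (n + j).factorial
      = (n.factorial * ∏ i ∈ sp, (κ i).factorial) * ((n + j).choose j * Nat.multinomial sp κ) := by
    rw [← h2, ← h1]; ring
  rw [h3, Nat.mul_div_cancel_left]
  exact Nat.mul_pos n.factorial_pos (Finset.prod_pos fun i _ => (κ i).factorial_pos)

end Helpers

open PowerSeries Finset in
/- main theorem -/
/-- For a commutative ring `A`, a sequence `a : ℕ → A` with `a 0` a unit, and `k ≤ n`: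
`a₀^{2n+1} · (coeff of z^k in f^{-(n+1)}) = ∑_{|α|' = k} μ(-(n+1); α) a₀^{n-|α|} ∏_{i≥1} aᵢ^{αᵢ}`,
where `f = ∑ aᵢ zⁱ` and the sum runs over finitely supported `α : {1,2,…} → ℕ`
with `|α|' = k`. -/
theorem coeff_inv_pow_eq_mu_sum {A : Type*} [CommRing A] (a : ℕ → A) (ha : IsUnit (a 0))
    (n k : ℕ) (hk : k ≤ n) :
    a 0 ^ (2 * n + 1) *
        PowerSeries.coeff k ((PowerSeries.mk a).invOfUnit ha.unit ^ (n + 1))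
    = ∑ᶠ α : ℕ+ →₀ ℕ,
        if (α.sum fun i m => (i : ℕ) * m) = k then
          (muCoef n α : A) * a 0 ^ (n - α.sum fun _ m => m) *
            (α.prod fun i m => a (i : ℕ) ^ m)
        else 0 := by
  classical
  set v : A := ((ha.unit⁻¹ : Aˣ) : A) with hv
  have hav : a 0 * v = 1 := by
    have h0 : (ha.unit : A) * ((ha.unit⁻¹ : Aˣ) : A) = 1 := ha.unit.mul_inv
    rwa [ha.unit_spec] at h0
  set b : ℕ → A := fun i => if i = 0 then 0 else v * a i with hb
  set g : A⟦X⟧ := PowerSeries.mk b with hgdef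
  set f : A⟦X⟧ := PowerSeries.mk a with hf
  have hg0 : constantCoeff g = 0 := by
    rw [hgdef, PowerSeries.constantCoeff_mk]; simp [hb]
  have hfg : C v * f = 1 + g := by
    ext m
    rw [PowerSeries.coeff_C_mul, hf, PowerSeries.coeff_mk, map_add, PowerSeries.coeff_one,
      hgdef, PowerSeries.coeff_mk, hb]
    cases m with
    | zero => simpa using (mul_comm v (a 0) ▸ hav)
    | succ m => simp
  set Wc : ℕ → A := fun j => (-1 : A) ^ j * ((n + j).choose n : A) with hWcdef
  set Q : A⟦X⟧ := ∑ j ∈ Finset.range (k + 1), C (Wc j) * g ^ j with hQ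
  set P : A⟦X⟧ := C (v ^ (n + 1)) * Q with hP
  have hfP : ∀ i ≤ k, PowerSeries.coeff i (f ^ (n + 1) * P) = PowerSeries.coeff i 1 := by
    intro i hi
    have he : f ^ (n + 1) * P = (1 + g) ^ (n + 1) * Q := by
      rw [hP, ← hfg, map_pow, mul_pow]; ring
    rw [he, hQ, hWcdef]
    exact key_approx n k hk g hg0 i hi
  have hfh : f ^ (n + 1) * (f.invOfUnit ha.unit) ^ (n + 1) = 1 := by
    rw [← mul_pow, PowerSeries.mul_invOfUnit f ha.unit
      (by rw [hf, PowerSeries.constantCoeff_mk, ha.unit_spec]), one_pow]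
  have hcoeffP : PowerSeries.coeff k ((f.invOfUnit ha.unit) ^ (n + 1))
      = PowerSeries.coeff k P := by
    set h' : A⟦X⟧ := (f.invOfUnit ha.unit) ^ (n + 1) with hh'
    have hd : h' - P = h' * (1 - f ^ (n + 1) * P) := by
      have h5 : h' * (f ^ (n + 1) * P) = P := by
        calc h' * (f ^ (n + 1) * P) = (f ^ (n + 1) * h') * P := by ring
        _ = P := by rw [hfh, one_mul]
      rw [mul_sub, mul_one, h5]
    have hz : PowerSeries.coeff k (h' - P) = 0 := by
      rw [hd, PowerSeries.coeff_mul]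
      apply Finset.sum_eq_zero
      rintro ⟨p, q⟩ hpq
      rw [Finset.HasAntidiagonal.mem_antidiagonal] at hpq
      have h6 : PowerSeries.coeff q (1 - f ^ (n + 1) * P) = 0 := by
        rw [map_sub, hfP q (by omega), sub_self]
      rw [h6, mul_zero]
    rw [map_sub] at hz
    exact sub_eq_zero.mp hz
  have hPk : PowerSeries.coeff k P
      = v ^ (n + 1) * ∑ j ∈ Finset.range (k + 1), Wc j * PowerSeries.coeff k (g ^ j) := by
    rw [hP, PowerSeries.coeff_C_mul, hQ, map_sum]
    congr 1
    exact Finset.sum_congr rfl fun j _ => by rw [PowerSeries.coeff_C_mul]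
  -- the PNat index finset
  set sp : Finset ℕ+ := (Finset.Icc 1 k).subtype (fun i => 0 < i) with hsp
  have hmemsp : ∀ i : ℕ+, i ∈ sp ↔ (i : ℕ) ≤ k := by
    intro i
    exact ⟨fun h => (Finset.mem_Icc.mp (Finset.mem_subtype.mp h)).2,
      fun h => Finset.mem_subtype.mpr (Finset.mem_Icc.mpr ⟨i.one_le, h⟩)⟩
  set g₁ : A⟦X⟧ := ∑ i ∈ sp, C (b i) * X ^ (i : ℕ) with hg₁
  have hgg₁ : ∀ m ≤ k, PowerSeries.coeff m g = PowerSeries.coeff m g₁ := by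
    intro m hm
    rw [hgdef, PowerSeries.coeff_mk, hg₁, map_sum]
    cases m with
    | zero =>
      rw [Finset.sum_eq_zero, hb]
      · simp
      · intro i _
        rw [PowerSeries.coeff_C_mul, PowerSeries.coeff_X_pow,
          if_neg (by exact fun h => by have := i.pos; omega), mul_zero]
    | succ m =>
      have hterm : ∀ i ∈ sp, PowerSeries.coeff (m + 1) (C (b i) * X ^ (i : ℕ))
          = if i = m.succPNat then b (m + 1) else 0 := by
        intro i _
        rw [PowerSeries.coeff_C_mul, PowerSeries.coeff_X_pow]
        by_cases hic : i = m.succPNat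
        · subst hic; simp
        · rw [if_neg (fun hh : m + 1 = (i : ℕ) => hic (PNat.coe_injective hh.symm)),
            mul_zero, if_neg hic]
      rw [Finset.sum_congr rfl hterm, Finset.sum_ite_eq' sp _ (fun _ => b (m + 1)),
        if_pos ((hmemsp _).mpr (by simpa using hm))]
  have hgj : ∀ j, PowerSeries.coeff k (g ^ j) = ∑ κ ∈ Finset.piAntidiag sp j,
      if (∑ i ∈ sp, (i : ℕ) * κ i) = k then
        (Nat.multinomial sp κ : A) * ∏ i ∈ sp, b i ^ κ i else 0 := by
    intro j
    rw [coeff_pow_congr hgg₁ j k le_rfl, hg₁, Finset.sum_pow_eq_sum_piAntidiag, map_sum]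
    apply Finset.sum_congr rfl
    intro κ _
    have hprod : ∏ i ∈ sp, (C (b i) * X ^ (i : ℕ)) ^ κ i
        = C (∏ i ∈ sp, b i ^ κ i) * X ^ (∑ i ∈ sp, (i : ℕ) * κ i) := by
      rw [map_prod, ← Finset.prod_pow_eq_pow_sum sp (fun i => (i : ℕ) * κ i) X,
        ← Finset.prod_mul_distrib]
      apply Finset.prod_congr rfl
      intro i _
      rw [mul_pow, ← map_pow, ← pow_mul]
    rw [hprod, ← map_natCast (C (R := A)) (Nat.multinomial sp κ), ← mul_assoc, ← map_mul,
      PowerSeries.coeff_C_mul, PowerSeries.coeff_X_pow]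
    by_cases hw : (∑ i ∈ sp, (i : ℕ) * κ i) = k
    · rw [if_pos hw.symm, if_pos hw, mul_one]
    · rw [if_neg (fun hh => hw hh.symm), mul_zero, if_neg hw]
  -- LHS chain
  have hL : a 0 ^ (2 * n + 1) *
      PowerSeries.coeff k ((f.invOfUnit ha.unit) ^ (n + 1))
      = ∑ j ∈ Finset.range (k + 1), ∑ κ ∈ Finset.piAntidiag sp j,
          (if (∑ i ∈ sp, (i : ℕ) * κ i) = k then
            Wc j * (Nat.multinomial sp κ : A) * (a 0 ^ n * ∏ i ∈ sp, b i ^ κ i) else 0) := by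
    rw [hcoeffP, hPk, ← mul_assoc]
    have hpow : a 0 ^ (2 * n + 1) * v ^ (n + 1) = a 0 ^ n := by
      have h7 : 2 * n + 1 = n + (n + 1) := by ring
      rw [h7, pow_add, mul_assoc, ← mul_pow, hav, one_pow, mul_one]
    rw [hpow, Finset.mul_sum]
    apply Finset.sum_congr rfl
    intro j _
    rw [hgj j, Finset.mul_sum, Finset.mul_sum]
    apply Finset.sum_congr rfl
    intro κ _
    split
    · ring
    · simp
  rw [hL]
  -- transfer to Finsupp world
  set F : (ℕ+ →₀ ℕ) → A := fun α =>
    if (α.sum fun i m => (i : ℕ) * m) = k then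
      (muCoef n α : A) * a 0 ^ (n - α.sum fun _ m => m) *
        (α.prod fun i m => a (i : ℕ) ^ m)
    else 0 with hF
  set e : (ℕ+ → ℕ) → (ℕ+ →₀ ℕ) := fun κ =>
    Finsupp.onFinset sp (fun i => if i ∈ sp then κ i else 0)
      (fun i h => by by_contra hc; exact h (if_neg hc)) with hedef
  have he_apply : ∀ κ i, e κ i = if i ∈ sp then κ i else 0 := fun κ i => rfl
  have hesupp : ∀ κ, (e κ).support ⊆ sp := fun κ => Finsupp.support_onFinset_subset
  have heapp : ∀ j : ℕ, ∀ κ ∈ Finset.piAntidiag sp j, ∀ i, e κ i = κ i := by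
    intro j κ hκ i
    rw [Finset.mem_piAntidiag] at hκ
    rw [he_apply]
    split
    · rfl
    · rename_i hns
      by_cases h0 : κ i = 0
      · rw [h0]
      · exact absurd (hκ.2 i h0) hns
  set V : Finset (ℕ+ →₀ ℕ) :=
    ((Finset.range (k + 1)).biUnion (fun j => Finset.piAntidiag sp j)).image e with hV
  have hFsupp : Function.support F ⊆ ↑V := by
    intro α hα
    have hw : (α.sum fun i m => (i : ℕ) * m) = k := by
      by_contra hc
      exact hα (by rw [hF]; exact if_neg hc)
    have hsuppα : α.support ⊆ sp := by
      intro i hi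
      rw [Finsupp.mem_support_iff] at hi
      rw [hmemsp]
      have h1 : (i : ℕ) * α i ≤ α.sum fun i m => (i : ℕ) * m := by
        rw [Finsupp.sum]
        exact Finset.single_le_sum (f := fun i : ℕ+ => (i : ℕ) * α i)
          (fun _ _ => Nat.zero_le _) (Finsupp.mem_support_iff.mpr hi)
      have h2 : (i : ℕ) ≤ (i : ℕ) * α i :=
        Nat.le_mul_of_pos_right _ (Nat.pos_of_ne_zero hi)
      omega
    have hsum : (α.sum fun _ m => m) = ∑ i ∈ sp, α i :=
      Finsupp.sum_of_support_subset α hsuppα _ (fun _ _ => rfl)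
    have hwsum : (∑ i ∈ sp, (i : ℕ) * α i) = k := by
      rw [← hw]
      exact (Finsupp.sum_of_support_subset α hsuppα _ (fun i _ => mul_zero (i:ℕ))).symm
    have hj0k : (∑ i ∈ sp, α i) ≤ k := by
      have h3 : ∑ i ∈ sp, α i ≤ ∑ i ∈ sp, (i : ℕ) * α i :=
        Finset.sum_le_sum (fun i _ => Nat.le_mul_of_pos_left _ i.pos)
      omega
    have hκmem : ⇑α ∈ Finset.piAntidiag sp (∑ i ∈ sp, α i) := by
      rw [Finset.mem_piAntidiag]
      exact ⟨rfl, fun i hi => hsuppα (Finsupp.mem_support_iff.mpr hi)⟩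
    have heα : e ⇑α = α := by
      apply Finsupp.ext
      intro i
      rw [he_apply]
      split
      · rfl
      · rename_i hns
        have h4 : i ∉ α.support := fun hmem => hns (hsuppα hmem)
        rw [Finsupp.notMem_support_iff] at h4
        rw [h4]
    rw [Finset.mem_coe, hV, Finset.mem_image]
    exact ⟨⇑α, Finset.mem_biUnion.mpr
      ⟨∑ i ∈ sp, α i, Finset.mem_range.mpr (by omega), hκmem⟩, heα⟩
  rw [finsum_eq_finset_sum_of_support_subset F hFsupp, hV]
  have hinj : ∀ x ∈ (Finset.range (k + 1)).biUnion (fun j => Finset.piAntidiag sp j),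
      ∀ y ∈ (Finset.range (k + 1)).biUnion (fun j => Finset.piAntidiag sp j),
      e x = e y → x = y := by
    intro x hx y hy hexy
    obtain ⟨jx, _, hxm⟩ := Finset.mem_biUnion.mp hx
    obtain ⟨jy, _, hym⟩ := Finset.mem_biUnion.mp hy
    funext i
    have h5 := DFunLike.congr_fun hexy i
    rwa [heapp jx x hxm i, heapp jy y hym i] at h5
  rw [Finset.sum_image hinj]
  rw [Finset.sum_biUnion (by
    intro j1 _ j2 _ hne
    rw [Function.onFun, Finset.disjoint_left]
    intro κ h1 h2
    rw [Finset.mem_piAntidiag] at h1 h2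
    exact hne (by rw [← h1.1, ← h2.1]))]
  apply Finset.sum_congr rfl
  intro j hj
  rw [Finset.mem_range] at hj
  apply Finset.sum_congr rfl
  intro κ hκ
  have hκ' := Finset.mem_piAntidiag.mp hκ
  obtain ⟨hκ1, hκ2⟩ := hκ'
  -- Finsupp sums/prods of e κ over sp
  have hesum : ((e κ).sum fun _ m => m) = j := by
    rw [Finsupp.sum_of_support_subset (e κ) (hesupp κ) _ (fun _ _ => rfl)]
    rw [Finset.sum_congr rfl (fun i _ => heapp j κ hκ i), hκ1]
  have heweight : ((e κ).sum fun i m => (i : ℕ) * m) = ∑ i ∈ sp, (i : ℕ) * κ i := by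
    rw [Finsupp.sum_of_support_subset (e κ) (hesupp κ) _ (fun i _ => mul_zero (i:ℕ))]
    exact Finset.sum_congr rfl (fun i _ => by rw [heapp j κ hκ i])
  have heprodfact : ((e κ).prod fun _ m => m.factorial) = ∏ i ∈ sp, (κ i).factorial := by
    rw [Finsupp.prod_of_support_subset (e κ) (hesupp κ) _ (fun _ _ => Nat.factorial_zero)]
    exact Finset.prod_congr rfl (fun i _ => by rw [heapp j κ hκ i])
  have heproda : ((e κ).prod fun i m => a (i : ℕ) ^ m) = ∏ i ∈ sp, a (i : ℕ) ^ κ i := by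
    rw [Finsupp.prod_of_support_subset (e κ) (hesupp κ) _ (fun i _ => pow_zero _)]
    exact Finset.prod_congr rfl (fun i _ => by rw [heapp j κ hκ i])
  have hmu : (muCoef n (e κ) : A)
      = (-1 : A) ^ j * (((n + j).choose j : A) * (Nat.multinomial sp κ : A)) := by
    rw [muCoef, hesum, heprodfact, factorial_div_eq n j sp κ hκ1]
    push_cast
    ring
  rw [hF]
  simp only [heweight, hesum, heproda]
  by_cases hwk : (∑ i ∈ sp, (i : ℕ) * κ i) = k
  · rw [if_pos hwk, if_pos hwk, hmu]
    have hbv : ∏ i ∈ sp, b (i : ℕ) ^ κ i = v ^ j * ∏ i ∈ sp, a (i : ℕ) ^ κ i := by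
      rw [← hκ1, ← Finset.prod_pow_eq_pow_sum sp κ v, ← Finset.prod_mul_distrib]
      apply Finset.prod_congr rfl
      intro i _
      have h6 : (i : ℕ) ≠ 0 := by have := i.pos; omega
      simp only [hb]
      rw [if_neg h6, mul_pow]
    have hjn : j ≤ n := le_trans (by omega) hk
    have ha0 : a 0 ^ n * v ^ j = a 0 ^ (n - j) := by
      have h7 : a 0 ^ n = a 0 ^ (n - j) * a 0 ^ j := by
        rw [← pow_add]
        congr 1
        omega
      rw [h7, mul_assoc, ← mul_pow, hav, one_pow, mul_one]
    have hcs : ((n + j).choose n : A) = ((n + j).choose j : A) := by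
      have := Nat.choose_symm (Nat.le_add_left j n)
      rw [Nat.add_sub_cancel] at this
      rw [← this]
    rw [hbv, hWcdef]
    simp only []
    rw [hcs]
    calc (-1:A) ^ j * ((n + j).choose j : A) * (Nat.multinomial sp κ : A) *
          (a 0 ^ n * (v ^ j * ∏ i ∈ sp, a (i:ℕ) ^ κ i))
        = (-1:A) ^ j * (((n + j).choose j : A) * (Nat.multinomial sp κ : A)) *
          ((a 0 ^ n * v ^ j) * ∏ i ∈ sp, a (i:ℕ) ^ κ i) := by ring
      _ = _ := by rw [ha0]; ring
  · rw [if_neg hwk, if_neg hwk]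

end
end

section
/- Division Algorithm: Let p be a prime, σ any type, and R = MvPolynomial σ ℤ. Let h ∈ R⟦ξ⟧ be a power series whose constant coefficient is the constant polynomial p. Then for every g ∈ R⟦ξ⟧ there exist unique power series d, s ∈ R⟦ξ⟧ such that g = d·h + s and, for every i, every integer coefficient of the polynomial coefficient s_i of ξ^i in s lies in the range {0, 1, …, p−1}. -/
noncomputable def modP {σ : Type*} (p : ℕ) (q : MvPolynomial σ ℤ) : MvPolynomial σ ℤ :=
  AddMonoidAlgebra.ofCoeff (Finsupp.mapRange (· % (p : ℤ)) (by simp) (AddMonoidAlgebra.coeff q))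

noncomputable def divP {σ : Type*} (p : ℕ) (q : MvPolynomial σ ℤ) : MvPolynomial σ ℤ :=
  AddMonoidAlgebra.ofCoeff (Finsupp.mapRange (· / (p : ℤ)) (by simp) (AddMonoidAlgebra.coeff q))

lemma coeff_modP {σ : Type*} (p : ℕ) (q : MvPolynomial σ ℤ) (m : σ →₀ ℕ) :
    MvPolynomial.coeff m (modP p q) = MvPolynomial.coeff m q % (p : ℤ) :=
  Finsupp.mapRange_apply (hf := by simp)

lemma coeff_divP {σ : Type*} (p : ℕ) (q : MvPolynomial σ ℤ) (m : σ →₀ ℕ) :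
    MvPolynomial.coeff m (divP p q) = MvPolynomial.coeff m q / (p : ℤ) :=
  Finsupp.mapRange_apply (hf := by simp)

lemma divP_modP {σ : Type*} (p : ℕ) (q : MvPolynomial σ ℤ) :
    divP p q * MvPolynomial.C (p : ℤ) + modP p q = q := by
  ext m
  rw [MvPolynomial.coeff_add, coeff_modP, mul_comm, MvPolynomial.coeff_C_mul, coeff_divP]
  exact Int.mul_ediv_add_emod _ _

noncomputable def dmAux {σ : Type*} (p : ℕ) (h g : PowerSeries (MvPolynomial σ ℤ)) :
    ℕ → MvPolynomial σ ℤ × MvPolynomial σ ℤ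
  | n =>
    let q := PowerSeries.coeff n g -
      ∑ i ∈ (Finset.range n).attach,
        (dmAux p h g i.1).1 * PowerSeries.coeff (n - i.1) h
    (divP p q, modP p q)
  decreasing_by exact Finset.mem_range.mp i.2

lemma dmAux_spec {σ : Type*} (p : ℕ) (h g : PowerSeries (MvPolynomial σ ℤ)) (n : ℕ) :
    dmAux p h g n =
      (divP p (PowerSeries.coeff n g -
        ∑ i ∈ Finset.range n, (dmAux p h g i).1 * PowerSeries.coeff (n - i) h),
       modP p (PowerSeries.coeff n g -
        ∑ i ∈ Finset.range n, (dmAux p h g i).1 * PowerSeries.coeff (n - i) h)) := by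
  rw [dmAux]
  simp [← Finset.sum_attach (Finset.range n)
    (fun i => (dmAux p h g i).1 * PowerSeries.coeff (n - i) h)]

lemma int_unique {p a1 a2 b1 b2 : ℤ} (hp : 0 < p) (h : p * a1 + b1 = p * a2 + b2)
    (hb1 : 0 ≤ b1 ∧ b1 < p) (hb2 : 0 ≤ b2 ∧ b2 < p) : a1 = a2 ∧ b1 = b2 := by
  have hd : p ∣ b1 - b2 := ⟨a2 - a1, by linarith⟩
  have hz : b1 - b2 = 0 := Int.eq_zero_of_abs_lt_dvd hd (by rw [abs_lt]; omega)
  constructor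
  · have : p * a1 = p * a2 := by omega
    exact mul_left_cancel₀ (by omega) this
  · omega

/-- Division Algorithm: over `R = MvPolynomial σ ℤ`, for any power series `h ∈ R⟦ξ⟧`
whose constant coefficient is the constant polynomial `p` (`p` prime) and any
`g ∈ R⟦ξ⟧`, there are unique power series `d, s` with `g = d·h + s` such that every
integer coefficient of every polynomial coefficient of `s` lies in `{0, …, p-1}`. -/
theorem division_algorithm {σ : Type*} (p : ℕ) (hp : p.Prime)
    (h : PowerSeries (MvPolynomial σ ℤ))
    (hh : PowerSeries.constantCoeff h = MvPolynomial.C (p : ℤ))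
    (g : PowerSeries (MvPolynomial σ ℤ)) :
    ∃! ds : PowerSeries (MvPolynomial σ ℤ) × PowerSeries (MvPolynomial σ ℤ),
      g = ds.1 * h + ds.2 ∧
        ∀ (i : ℕ) (m : σ →₀ ℕ),
          0 ≤ MvPolynomial.coeff m (PowerSeries.coeff i ds.2) ∧
            MvPolynomial.coeff m (PowerSeries.coeff i ds.2) < (p : ℤ) := by
  have hp0 : (0 : ℤ) < (p : ℤ) := by exact_mod_cast hp.pos
  set d : PowerSeries (MvPolynomial σ ℤ) := PowerSeries.mk fun n => (dmAux p h g n).1 with hd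
  set s : PowerSeries (MvPolynomial σ ℤ) := PowerSeries.mk fun n => (dmAux p h g n).2 with hs
  have hge : g = d * h + s := by
    refine PowerSeries.ext fun n => ?_
    rw [map_add, PowerSeries.coeff_mul,
      Finset.Nat.sum_antidiagonal_eq_sum_range_succ_mk, Finset.sum_range_succ]
    simp only [hd, hs, PowerSeries.coeff_mk, Nat.sub_self,
      PowerSeries.coeff_zero_eq_constantCoeff, hh]
    rw [dmAux_spec p h g n, add_assoc]
    rw [divP_modP]
    ring
  have hrange : ∀ (i : ℕ) (m : σ →₀ ℕ),
      0 ≤ MvPolynomial.coeff m (PowerSeries.coeff i s) ∧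
        MvPolynomial.coeff m (PowerSeries.coeff i s) < (p : ℤ) := by
    intro i m
    simp only [hs, PowerSeries.coeff_mk]
    rw [dmAux_spec p h g i, coeff_modP]
    exact ⟨Int.emod_nonneg _ (by omega), Int.emod_lt_of_pos _ hp0⟩
  refine ⟨(d, s), ⟨hge, hrange⟩, ?_⟩
  rintro ⟨d2, s2⟩ ⟨heq2, hr2⟩
  have heq2' : g = d2 * h + s2 := heq2
  have hr2' : ∀ (i : ℕ) (m : σ →₀ ℕ),
      0 ≤ MvPolynomial.coeff m (PowerSeries.coeff i s2) ∧
        MvPolynomial.coeff m (PowerSeries.coeff i s2) < (p : ℤ) := hr2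
  have key : ∀ n, PowerSeries.coeff n d2 =
        PowerSeries.coeff n d ∧
      PowerSeries.coeff n s2 = PowerSeries.coeff n s := by
    intro n
    induction n using Nat.strong_induction_on with
    | _ n IH =>
      have hcoef : PowerSeries.coeff n (d2 * h + s2) =
          PowerSeries.coeff n (d * h + s) := by
        rw [← heq2', ← hge]
      rw [map_add, map_add, PowerSeries.coeff_mul, PowerSeries.coeff_mul,
        Finset.Nat.sum_antidiagonal_eq_sum_range_succ_mk,
        Finset.Nat.sum_antidiagonal_eq_sum_range_succ_mk,
        Finset.sum_range_succ, Finset.sum_range_succ] at hcoef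
      have hsum : ∑ i ∈ Finset.range n, PowerSeries.coeff i d2 *
            PowerSeries.coeff (n - i) h =
          ∑ i ∈ Finset.range n, PowerSeries.coeff i d *
            PowerSeries.coeff (n - i) h :=
        Finset.sum_congr rfl fun i hi => by rw [(IH i (Finset.mem_range.mp hi)).1]
      rw [hsum] at hcoef
      simp only [Nat.sub_self, PowerSeries.coeff_zero_eq_constantCoeff, hh] at hcoef
      rw [add_assoc, add_assoc] at hcoef
      have hmain := add_left_cancel hcoef
      constructor
      · refine MvPolynomial.ext _ _ fun m => ?_
        have h2 := congrArg (MvPolynomial.coeff m) hmain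
        rw [MvPolynomial.coeff_add, MvPolynomial.coeff_add, mul_comm _ (MvPolynomial.C (p:ℤ)),
          mul_comm _ (MvPolynomial.C (p:ℤ)), MvPolynomial.coeff_C_mul,
          MvPolynomial.coeff_C_mul] at h2
        exact (int_unique hp0 h2 (hr2' n m) (hrange n m)).1
      · refine MvPolynomial.ext _ _ fun m => ?_
        have h2 := congrArg (MvPolynomial.coeff m) hmain
        rw [MvPolynomial.coeff_add, MvPolynomial.coeff_add, mul_comm _ (MvPolynomial.C (p:ℤ)),
          mul_comm _ (MvPolynomial.C (p:ℤ)), MvPolynomial.coeff_C_mul,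
          MvPolynomial.coeff_C_mul] at h2
        exact (int_unique hp0 h2 (hr2' n m) (hrange n m)).2
  have e1 : d2 = d := PowerSeries.ext fun n => (key n).1
  have e2 : s2 = s := PowerSeries.ext fun n => (key n).2
  rw [Prod.mk.injEq]
  exact ⟨e1, e2⟩
end
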